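/- arXiv:1707.03861 — 8 statements merged into one kernel-verified Lean document; each statement's English description precedes it below -/
import Mathlib

section
/- For elements A and B of an associative unital (not necessarily commutative) algebra, and for every natural number n, (A+B)^n = ∑_{k=0}^n C(n,k) · ((L_A + ad_B)^k applied to 1) · B^{n-k}, where L_A is left multiplication by A and ad_B(X) = BX - XB. -/
theorem stmt_0 {𝔄 : Type*} [Ring 𝔄] (A B : 𝔄) (n : ℕ) :
    (A + B) ^ n =
      ∑ k ∈ Finset.range (n + 1),
        n.choose k • ((fun X => A * X + (B * X - X * B))^[k] 1 * B ^ (n - k)) := by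
  set f : 𝔄 → 𝔄 := fun X => A * X + (B * X - X * B) with hf
  set S : ℕ → 𝔄 := fun k => f^[k] 1 with hS
  show (A + B) ^ n = ∑ k ∈ Finset.range (n + 1), n.choose k • (S k * B ^ (n - k))
  have hSsucc : ∀ k, S (k + 1) = (A + B) * S k - S k * B := by
    intro k
    simp only [hS, Function.iterate_succ_apply', hf]
    noncomm_ring
  induction n with
  | zero => simp [hS]
  | succ n ih =>
    calc (A + B) ^ (n + 1) = (A + B) * (A + B) ^ n := by rw [pow_succ']
    _ = ∑ k ∈ Finset.range (n + 1), n.choose k • ((A + B) * (S k * B ^ (n - k))) := by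
        rw [ih, Finset.mul_sum]
        exact Finset.sum_congr rfl fun k _ => by rw [mul_smul_comm]
    _ = ∑ k ∈ Finset.range (n + 1), n.choose k • (S (k + 1) * B ^ (n - k))
        + ∑ k ∈ Finset.range (n + 1), n.choose k • (S k * B ^ (n + 1 - k)) := by
        rw [← Finset.sum_add_distrib]
        refine Finset.sum_congr rfl fun k hk => ?_
        have hk' : k ≤ n := Nat.lt_succ_iff.mp (Finset.mem_range.mp hk)
        have h1 : (A + B) * (S k * B ^ (n - k)) =
            S (k + 1) * B ^ (n - k) + S k * (B ^ (n - k) * B) := by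
          rw [hSsucc, show B ^ (n - k) * B = B * B ^ (n - k) from by
            rw [← pow_succ, ← pow_succ']]
          noncomm_ring
        rw [h1, ← pow_succ, Nat.succ_sub hk', smul_add]
    _ = ∑ k ∈ Finset.range (n + 1 + 1), (n + 1).choose k • (S k * B ^ (n + 1 - k)) := by
        rw [Finset.sum_range_succ' (fun k => (n + 1).choose k • (S k * B ^ (n + 1 - k)))]
        have h2 : ∑ k ∈ Finset.range (n + 1), n.choose k • (S k * B ^ (n + 1 - k))
            = ∑ k ∈ Finset.range (n + 1), n.choose (k + 1) • (S (k + 1) * B ^ (n - k))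
              + n.choose 0 • (S 0 * B ^ (n + 1)) := by
          rw [Finset.sum_range_succ' (fun k => n.choose k • (S k * B ^ (n + 1 - k)))]
          simp only [Nat.succ_sub_succ, Nat.sub_zero]
          rw [Finset.sum_range_succ, Nat.choose_succ_self]
          simp
        rw [h2, ← add_assoc, ← Finset.sum_add_distrib]
        simp only [Nat.succ_sub_succ, Nat.choose_succ_succ, add_smul, Nat.choose_zero_right,
          Nat.sub_zero]
end

section
/- In a (possibly noncommutative) Banach algebra with identity (or in the algebra of formal power series over an associative algebra), e^{A+B} = (e^{L_A + ad_B} applied to 1) · e^B, where L_A is left multiplication by A and ad_B(X) = BX - XB. -/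
open NormedSpace

lemma clm_exp_apply {𝔄 : Type*} [NormedRing 𝔄] [NormedAlgebra ℝ 𝔄] [CompleteSpace 𝔄]
    (T : 𝔄 →L[ℝ] 𝔄) (x : 𝔄) :
    NormedSpace.exp T x = ∑' n : ℕ, ((n.factorial : ℝ))⁻¹ • (T ^ n) x := by
  rw [NormedSpace.exp_eq_tsum (𝕂 := ℝ)]
  have := (ContinuousLinearMap.apply ℝ 𝔄 x).map_tsum
    (NormedSpace.expSeries_summable' (𝕂 := ℝ) T)
  simpa using this

lemma exp_mulLeft_apply {𝔄 : Type*} [NormedRing 𝔄] [NormedAlgebra ℝ 𝔄] [CompleteSpace 𝔄]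
    (C x : 𝔄) :
    NormedSpace.exp (ContinuousLinearMap.mul ℝ 𝔄 C) x = NormedSpace.exp C * x := by
  rw [clm_exp_apply, NormedSpace.exp_eq_tsum (𝕂 := ℝ)]
  have hpow : ∀ n : ℕ, (ContinuousLinearMap.mul ℝ 𝔄 C ^ n) x = C ^ n * x := by
    intro n
    induction n with
    | zero => simp
    | succ n ih =>
      rw [pow_succ', ContinuousLinearMap.mul_apply, ih, pow_succ', mul_assoc]
      rfl
  simp_rw [hpow]
  have := ((ContinuousLinearMap.mul ℝ 𝔄).flip x).map_tsum
    (NormedSpace.expSeries_summable' (𝕂 := ℝ) C)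
  simp only [map_smul, ContinuousLinearMap.flip_apply, ContinuousLinearMap.mul_apply'] at this
  exact this.symm

lemma exp_mulRight_one {𝔄 : Type*} [NormedRing 𝔄] [NormedAlgebra ℝ 𝔄] [CompleteSpace 𝔄]
    (C : 𝔄) :
    NormedSpace.exp ((ContinuousLinearMap.mul ℝ 𝔄).flip C) 1 = NormedSpace.exp C := by
  rw [clm_exp_apply, NormedSpace.exp_eq_tsum (𝕂 := ℝ)]
  congr 1
  ext n
  congr 1
  induction n with
  | zero => simp
  | succ n ih =>
    rw [pow_succ', ContinuousLinearMap.mul_apply, ih, ContinuousLinearMap.flip_apply,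
      ContinuousLinearMap.mul_apply', ← pow_succ]

theorem stmt_3 {𝔄 : Type*} [NormedRing 𝔄] [NormedAlgebra ℝ 𝔄] [CompleteSpace 𝔄]
    (A B : 𝔄) :
    NormedSpace.exp (A + B) =
      (NormedSpace.exp
        (ContinuousLinearMap.mul ℝ 𝔄 A + ContinuousLinearMap.mul ℝ 𝔄 B -
          (ContinuousLinearMap.mul ℝ 𝔄).flip B)) 1 * NormedSpace.exp B := by
  let +nondep : NormedAlgebra ℚ 𝔄 := .restrictScalars ℚ ℝ 𝔄
  let +nondep : NormedAlgebra ℚ (𝔄 →L[ℝ] 𝔄) := .restrictScalars ℚ ℝ (𝔄 →L[ℝ] 𝔄)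
  have h1 : ContinuousLinearMap.mul ℝ 𝔄 A + ContinuousLinearMap.mul ℝ 𝔄 B -
      (ContinuousLinearMap.mul ℝ 𝔄).flip B =
      ContinuousLinearMap.mul ℝ 𝔄 (A + B) + (-(ContinuousLinearMap.mul ℝ 𝔄).flip B) := by
    rw [map_add]; abel
  have hcomm : Commute (ContinuousLinearMap.mul ℝ 𝔄 (A + B))
      (-(ContinuousLinearMap.mul ℝ 𝔄).flip B) := by
    apply Commute.neg_right
    ext x
    simp [ContinuousLinearMap.mul_apply', mul_assoc]
  rw [h1, NormedSpace.exp_add_of_commute hcomm, ContinuousLinearMap.mul_apply,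
    ← map_neg ((ContinuousLinearMap.mul ℝ 𝔄).flip), exp_mulRight_one, exp_mulLeft_apply,
    mul_assoc, ← NormedSpace.exp_add_of_commute ((Commute.refl B).neg_left), neg_add_cancel,
    NormedSpace.exp_zero, mul_one]
end

section
/- Let A, B be elements of an associative unital algebra over a commutative ring containing a scalar h, with BA - AB = h·A². Then for all n, (A+B)^n = ∑_{k=0}^n C(n,k) · γ_k(h) · A^k · B^{n-k}, where γ_k(h) = ∏_{j=0}^{k-1}(1 + jh) (with γ_0(h) = 1). -/
theorem stmt_5 {R 𝔄 : Type*} [CommRing R] [Ring 𝔄] [Algebra R 𝔄]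
    (h : R) (A B : 𝔄) (hBA : B * A - A * B = h • A ^ 2) (n : ℕ) :
    (A + B) ^ n =
      ∑ k ∈ Finset.range (n + 1),
        n.choose k • ((∏ j ∈ Finset.range k, (1 + j • h)) • (A ^ k * B ^ (n - k))) := by
  have hBA' : B * A = A * B + h • A ^ 2 := sub_eq_iff_eq_add'.mp hBA
  have hcomm : ∀ k : ℕ, B * A ^ k = A ^ k * B + (k • h) • A ^ (k + 1) := by
    intro k
    induction k with
    | zero => simp
    | succ k ihk =>
      rw [pow_succ, ← mul_assoc, ihk, add_mul, smul_mul_assoc, mul_assoc, hBA', mul_add,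
        ← mul_assoc, ← pow_succ, mul_smul_comm, ← pow_add, ← pow_succ, succ_nsmul, add_smul]
      show A ^ (k + 1) * B + h • A ^ (k + 2) + (k • h) • A ^ (k + 1 + 1)
        = A ^ (k + 1) * B + ((k • h) • A ^ (k + 1 + 1) + h • A ^ (k + 1 + 1))
      have : k + 2 = k + 1 + 1 := rfl
      rw [this]; abel
  induction n with
  | zero => simp
  | succ n ih =>
    have key : ∀ k e : ℕ, (A + B) * (A ^ k * B ^ e)
        = (1 + k • h) • (A ^ (k + 1) * B ^ e) + A ^ k * B ^ (e + 1) := by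
      intro k e
      rw [add_mul, ← mul_assoc, ← pow_succ', ← mul_assoc, hcomm k, add_mul, smul_mul_assoc,
        mul_assoc, ← pow_succ', add_smul, one_smul]
      abel
    set g : ℕ → 𝔄 := fun k => (∏ j ∈ Finset.range k, (1 + j • h)) • (A ^ k * B ^ (n + 1 - k))
      with hg
    have step : ∀ k ∈ Finset.range (n + 1),
        (A + B) * (n.choose k • ((∏ j ∈ Finset.range k, (1 + j • h)) • (A ^ k * B ^ (n - k))))
        = n.choose k • g (k + 1) + n.choose k • g k := by
      intro k hk
      have hkn : k ≤ n := Nat.lt_succ_iff.mp (Finset.mem_range.mp hk)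
      have h1 : n + 1 - (k + 1) = n - k := by omega
      have h2 : n + 1 - k = (n - k) + 1 := by omega
      rw [mul_smul_comm, mul_smul_comm, key k (n - k), hg]
      simp only [h1, h2]
      rw [Finset.prod_range_succ, smul_add, ← smul_smul, smul_smul
        ((∏ j ∈ Finset.range k, (1 + j • h))) (1 + k • h), smul_add]
    rw [pow_succ', ih, Finset.mul_sum, Finset.sum_congr rfl step, Finset.sum_add_distrib]
    have expand : ∑ k ∈ Finset.range (n + 2), (n + 1).choose k • g k
        = ∑ k ∈ Finset.range (n + 1), n.choose k • g (k + 1)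
          + ∑ k ∈ Finset.range (n + 1), n.choose k • g k := by
      rw [Finset.sum_range_succ']
      have : ∀ k ∈ Finset.range (n + 1),
          (n + 1).choose (k + 1) • g (k + 1)
            = n.choose k • g (k + 1) + n.choose (k + 1) • g (k + 1) := by
        intro k _
        rw [Nat.choose_succ_succ, add_smul]
      rw [Finset.sum_congr rfl this, Finset.sum_add_distrib, add_assoc]
      congr 1
      have h0 : (n + 1).choose 0 • g 0 = n.choose 0 • g 0 := by simp
      rw [h0, ← Finset.sum_range_succ' (fun k => n.choose k • g k) (n + 1),
        Finset.sum_range_succ, Nat.choose_succ_self]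
      simp
    rw [expand]
end

section
/- Let A, B be elements of an associative unital algebra with BA - AB = A². Then for all natural numbers n, (A+B)^n = ∑_{k=0}^n (n!/(n-k)!) · A^k · B^{n-k}. -/
lemma commpow {𝔄 : Type*} [Ring 𝔄] [Algebra ℚ 𝔄]
    (A B : 𝔄) (hBA : B * A - A * B = A ^ 2) (k : ℕ) :
    B * A ^ k = A ^ k * B + (k : ℚ) • A ^ (k + 1) := by
  have hba : B * A = A ^ 2 + A * B := sub_eq_iff_eq_add.mp hBA
  induction k with
  | zero => simp
  | succ k ih =>
    rw [pow_succ, ← mul_assoc, ih, add_mul, mul_assoc, hba, smul_mul_assoc,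
      ← pow_succ]
    push_cast
    rw [add_smul, one_smul]
    have h2 : A ^ k * A ^ 2 = A ^ (k + 1 + 1) := by rw [← pow_add]
    have h3 : A ^ k * A = A ^ (k + 1) := by rw [← pow_succ]
    rw [mul_add, h2, h3]
    rw [← mul_assoc, h3]; abel

lemma key {𝔄 : Type*} [Ring 𝔄] [Algebra ℚ 𝔄]
    (A B : 𝔄) (hBA : B * A - A * B = A ^ 2) (n : ℕ) :
    (A + B) ^ n = ∑ k ∈ Finset.range (n + 1),
      ((n.choose k * k.factorial : ℕ) : ℚ) • (A ^ k * B ^ (n - k)) := by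
  induction n with
  | zero => simp
  | succ n ih =>
    rw [pow_succ', ih, Finset.mul_sum]
    have step : ∀ k ∈ Finset.range (n + 1),
        (A + B) * (((n.choose k * k.factorial : ℕ) : ℚ) • (A ^ k * B ^ (n - k)))
        = ((n.choose k * k.factorial : ℕ) : ℚ) • (A ^ k * B ^ (n + 1 - k))
          + (((k + 1) * (n.choose k * k.factorial) : ℕ) : ℚ) •
              (A ^ (k + 1) * B ^ (n - k)) := by
      intro k hk
      rw [Finset.mem_range] at hk
      have hsub : n + 1 - k = (n - k) + 1 := by omega
      rw [hsub, pow_succ' B, mul_smul_comm, add_mul, ← mul_assoc B,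
        commpow A B hBA k, add_mul, smul_mul_assoc, mul_assoc (A ^ k) B,
        ← mul_assoc A, ← pow_succ' A]
      push_cast
      module
    rw [Finset.sum_congr rfl step, Finset.sum_add_distrib]
    rw [Finset.sum_range_succ'
      (fun k => ((n.choose k * k.factorial : ℕ) : ℚ) • (A ^ k * B ^ (n + 1 - k))) n]
    conv_rhs => rw [Finset.sum_range_succ'
      (fun k => (((n + 1).choose k * k.factorial : ℕ) : ℚ) • (A ^ k * B ^ (n + 1 - k))) (n + 1)]
    simp only [Nat.succ_sub_succ, Nat.sub_zero, pow_zero, one_mul,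
      Nat.choose_zero_right, Nat.factorial_zero, Nat.cast_one, one_smul, mul_one]
    have hext : ∑ i ∈ Finset.range n,
        ((n.choose (i + 1) * (i + 1).factorial : ℕ) : ℚ) • (A ^ (i + 1) * B ^ (n - i))
        = ∑ i ∈ Finset.range (n + 1),
        ((n.choose (i + 1) * (i + 1).factorial : ℕ) : ℚ) • (A ^ (i + 1) * B ^ (n - i)) := by
      rw [Finset.sum_range_succ, Nat.choose_succ_self]
      simp
    rw [hext, add_right_comm, ← Finset.sum_add_distrib]
    congr 1
    refine Finset.sum_congr rfl fun i _ => ?_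
    rw [← add_smul]
    congr 1
    push_cast [Nat.choose_succ_succ, Nat.factorial_succ]
    ring

theorem stmt_6 {𝔄 : Type*} [Ring 𝔄] [Algebra ℚ 𝔄]
    (A B : 𝔄) (hBA : B * A - A * B = A ^ 2) (n : ℕ) :
    (A + B) ^ n =
      ∑ k ∈ Finset.range (n + 1),
        ((n.factorial : ℚ) / (n - k).factorial) • (A ^ k * B ^ (n - k)) := by
  rw [key A B hBA n]
  refine Finset.sum_congr rfl fun k hk => ?_
  rw [Finset.mem_range] at hk
  congr 1
  have h := Nat.choose_mul_factorial_mul_factorial (Nat.lt_succ_iff.mp hk)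
  have hne : ((n - k).factorial : ℚ) ≠ 0 := by positivity
  field_simp
  push_cast [← h]
  ring
end

section
/- Let A, B be elements of an associative unital algebra and define M_n = ∑_{k=0}^n C(n,k) A^k B^{n-k}. Then M_1 · M_n = M_{n+1} + ad_B(M_n), where ad_B(X) = BX - XB. -/
theorem stmt_8 {𝔄 : Type*} [Ring 𝔄] (A B : 𝔄) (n : ℕ)
    (M : ℕ → 𝔄)
    (hM : ∀ m, M m = ∑ k ∈ Finset.range (m + 1), m.choose k • (A ^ k * B ^ (m - k))) :
    M 1 * M n = M (n + 1) + (B * M n - M n * B) := by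
  have hMB : M n * B = ∑ k ∈ Finset.range (n+1), n.choose k • (A ^ k * B ^ (n + 1 - k)) := by
    rw [hM, Finset.sum_mul]
    refine Finset.sum_congr rfl fun k hk => ?_
    rw [Finset.mem_range] at hk
    rw [smul_mul_assoc, mul_assoc, ← pow_succ, Nat.sub_add_comm (by omega)]
  have hAM : A * M n = ∑ k ∈ Finset.range (n+1), n.choose k • (A ^ (k+1) * B ^ (n - k)) := by
    rw [hM, Finset.mul_sum]
    refine Finset.sum_congr rfl fun k hk => ?_
    rw [mul_smul_comm, ← mul_assoc, ← pow_succ']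
  have h2 : ∑ k ∈ Finset.range (n+1), n.choose k • (A ^ k * B ^ (n+1-k)) =
      (∑ k ∈ Finset.range (n+1), n.choose (k+1) • (A ^ (k+1) * B ^ (n-k))) + B ^ (n+1) := by
    rw [Finset.sum_range_succ' (fun k => n.choose k • (A ^ k * B ^ (n+1-k))) n]
    rw [Finset.sum_range_succ (fun k => n.choose (k+1) • (A ^ (k+1) * B ^ (n-k))) n]
    simp [Nat.succ_sub_succ, Nat.choose_succ_self]
  have key : A * M n + M n * B = M (n+1) := by
    rw [hAM, hMB, hM, h2]
    rw [Finset.sum_range_succ' (fun k => (n+1).choose k • (A ^ k * B ^ (n+1-k))) (n+1)]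
    simp only [Nat.choose_succ_succ, add_smul, Finset.sum_add_distrib, Nat.succ_sub_succ,
      pow_zero, one_mul, Nat.choose_zero_right, one_smul]
    abel
  have hM1 : M 1 = B + A := by
    simp [hM, Finset.sum_range_succ]
  rw [hM1, add_mul, ← key]
  abel
end

section
/- Let A, B be elements of an associative unital algebra and M_n = ∑_{k=0}^n C(n,k) A^k B^{n-k}. Then for all n ≥ 2, (A+B)^n = M_n + ∑_{k=0}^{n-2} (A+B)^k · ad_B(M_{n-1-k}), where ad_B(X) = BX - XB. -/
theorem stmt_9 {𝔄 : Type*} [Ring 𝔄] (A B : 𝔄) (n : ℕ) (hn : 2 ≤ n)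
    (M : ℕ → 𝔄)
    (hM : ∀ m, M m = ∑ k ∈ Finset.range (m + 1), m.choose k • (A ^ k * B ^ (m - k))) :
    (A + B) ^ n =
      M n + ∑ k ∈ Finset.range (n - 1),
        (A + B) ^ k * (B * M (n - 1 - k) - M (n - 1 - k) * B) := by
  have key : ∀ m, A * M m + M m * B = M (m + 1) := by
    intro m
    rw [hM m, hM (m + 1), Finset.mul_sum, Finset.sum_mul]
    rw [Finset.sum_range_succ' (fun k => (m + 1).choose k • (A ^ k * B ^ (m + 1 - k)))]
    have h1 : ∀ k ∈ Finset.range (m + 1),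
        (m + 1).choose (k + 1) • (A ^ (k + 1) * B ^ (m + 1 - (k + 1)))
        = A * (m.choose k • (A ^ k * B ^ (m - k)))
          + m.choose (k + 1) • (A ^ (k + 1) * B ^ (m - k)) := by
      intro k hk
      rw [Nat.succ_sub_succ, Nat.choose_succ_succ, add_smul, mul_smul_comm]
      simp [pow_succ', mul_assoc]
    rw [Finset.sum_congr rfl h1, Finset.sum_add_distrib]
    have h2 : (∑ k ∈ Finset.range (m + 1), m.choose k • (A ^ k * B ^ (m - k)) * B)
        = ∑ k ∈ Finset.range (m + 1), m.choose (k + 1) • (A ^ (k + 1) * B ^ (m - k))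
          + 1 • (A ^ 0 * B ^ (m + 1)) := by
      rw [Finset.sum_range_succ' (fun k => m.choose k • (A ^ k * B ^ (m - k)) * B),
        Finset.sum_range_succ (fun k => m.choose (k + 1) • (A ^ (k + 1) * B ^ (m - k)))]
      simp only [Nat.choose_succ_self, zero_smul, add_zero, Nat.choose_zero_right,
        Nat.sub_zero, pow_zero, one_mul, one_smul]
      rw [pow_succ]
      congr 1
      apply Finset.sum_congr rfl
      intro k hk
      simp only [Finset.mem_range] at hk
      have hmk : m - (k + 1) + 1 = m - k := by omega
      rw [smul_mul_assoc, mul_assoc, ← pow_succ, hmk]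
    rw [h2]
    simp only [Nat.choose_zero_right, Nat.sub_zero, pow_zero, one_mul, one_smul]
    abel
  have aux : ∀ m : ℕ, (A + B) ^ (m + 1) =
      M (m + 1) + ∑ k ∈ Finset.range m,
        (A + B) ^ k * (B * M (m - k) - M (m - k) * B) := by
    intro m
    induction m with
    | zero =>
      simp [hM, Finset.sum_range_succ, add_comm]
    | succ m ih =>
      have hpow : (A + B) ^ (m + 1 + 1) = (A + B) * (A + B) ^ (m + 1) := by
        rw [← pow_succ']
      rw [hpow, ih, mul_add, Finset.mul_sum]
      have hrw : ∀ k ∈ Finset.range m,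
          (A + B) * ((A + B) ^ k * (B * M (m - k) - M (m - k) * B))
          = (A + B) ^ (k + 1) * (B * M (m + 1 - (k + 1)) - M (m + 1 - (k + 1)) * B) := by
        intro k hk
        rw [Nat.succ_sub_succ, ← mul_assoc, ← pow_succ']
      rw [Finset.sum_congr rfl hrw]
      rw [Finset.sum_range_succ' (fun k =>
        (A + B) ^ k * (B * M (m + 1 - k) - M (m + 1 - k) * B))]
      have hAB : (A + B) * M (m + 1) = M (m + 1 + 1) + (B * M (m + 1) - M (m + 1) * B) := by
        rw [← key (m + 1)]; noncomm_ring
      rw [hAB]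
      simp only [pow_zero, one_mul, Nat.sub_zero]
      abel
  have hne : n = (n - 1) + 1 := by omega
  rw [hne, aux (n - 1)]
  simp only [Nat.add_sub_cancel]
end

section
/- Let A, B, C be elements of an associative unital ℚ-algebra with BA - AB = C and C commuting with A and B. Then for all n, (A+B)^n = ∑_{k=0}^{⌊n/2⌋} M_{n-2k} · (n!/((n-2k)!·k!·2^k)) · C^k, where M_m = ∑_{r=0}^m C(m,r) A^r B^{m-r}. -/
open Finset

noncomputable def aa : ℕ → ℕ → ℚ :=
  fun n k => if 2*k ≤ n then (n.factorial : ℚ) / ((n - 2*k).factorial * k.factorial * 2 ^ k) else 0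

lemma aa_zero (n : ℕ) : aa n 0 = 1 := by
  simp [aa, Nat.factorial_ne_zero, div_self]

lemma aa_eq (n k : ℕ) (h : 2*k ≤ n) :
    aa n k = (n.factorial : ℚ) / ((n - 2*k).factorial * k.factorial * 2 ^ k) := by
  simp [aa, h]

lemma aa_nil (n k : ℕ) (h : n < 2*k) : aa n k = 0 := by
  simp [aa, Nat.not_le.mpr h]

lemma aa_rec (n k : ℕ) : aa (n+1) (k+1) = aa n (k+1) + ((n - 2*k : ℕ) : ℚ) * aa n k := by
  rcases Nat.lt_or_ge n (2*k) with h | h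
  · rw [aa_nil _ _ (by omega), aa_nil _ _ (by omega), aa_nil _ _ (by omega)]
    have : n - 2*k = 0 := by omega
    simp [this]
  rcases Nat.eq_or_lt_of_le h with h0 | h1
  · rw [aa_nil _ _ (by omega), aa_nil _ _ (by omega)]
    have : n - 2*k = 0 := by omega
    simp [this]
  rcases Nat.eq_or_lt_of_le h1 with h2 | h3
  · obtain rfl : n = 2*k+1 := h2.symm
    rw [aa_eq _ _ (by omega), aa_nil _ _ (by omega), aa_eq _ _ (by omega)]
    have e1 : 2*k+1+1 - 2*(k+1) = 0 := by omega
    have e2 : 2*k+1 - 2*k = 1 := by omega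
    rw [e1, e2]
    have e3 : (2*k+1+1) = (2*k+1) + 1 := by ring
    rw [e3, Nat.factorial_succ (2*k+1), Nat.factorial_succ k]
    push_cast
    have hk : (k.factorial : ℚ) ≠ 0 := Nat.cast_ne_zero.mpr (Nat.factorial_ne_zero k)
    field_simp
    ring
  · obtain ⟨m, rfl⟩ : ∃ m, n = m + 2*k + 2 := ⟨n - 2*k - 2, by omega⟩
    rw [aa_eq _ _ (by omega), aa_eq _ _ (by omega), aa_eq _ _ (by omega)]
    have e1 : m + 2*k + 2 + 1 - 2*(k+1) = m+1 := by omega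
    have e2 : m + 2*k + 2 - 2*(k+1) = m := by omega
    have e3 : m + 2*k + 2 - 2*k = m+2 := by omega
    rw [e1, e2, e3]
    have f1 : (m + 2*k + 2 + 1).factorial = (m+2*k+3) * (m+2*k+2).factorial := by
      rw [show m+2*k+2+1 = (m+2*k+2)+1 by ring, Nat.factorial_succ]
    rw [f1, Nat.factorial_succ (k), show m+2 = (m+1)+1 by ring, Nat.factorial_succ (m+1),
      Nat.factorial_succ m]
    push_cast
    have h1 : (m.factorial : ℚ) ≠ 0 := Nat.cast_ne_zero.mpr (Nat.factorial_ne_zero m)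
    have h2 : (k.factorial : ℚ) ≠ 0 := Nat.cast_ne_zero.mpr (Nat.factorial_ne_zero k)
    have h3 : ((m+1 : ℚ)) ≠ 0 := by positivity
    field_simp
    ring

section
variable {𝔄 : Type*} [Ring 𝔄] (A B C : 𝔄)

lemma cB (hBC : B * C = C * B) (s : ℕ) : C * B ^ s = B ^ s * C :=
  ((Commute.symm hBC).pow_right s).eq

lemma bpow (hBA : B * A - A * B = C) (hAC : A * C = C * A) (r : ℕ) :
    B * A ^ (r+1) = A ^ (r+1) * B + (r+1) • (A ^ r * C) := by
  have hba : B * A = C + A * B := eq_add_of_sub_eq hBA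
  induction r with
  | zero => simpa using by rw [hba]; abel
  | succ r ih =>
    have h0 : B * A ^ (r+2) = (B * A ^ (r+1)) * A := by rw [mul_assoc, ← pow_succ]
    rw [h0, ih, add_mul, smul_mul_assoc, mul_assoc (A^r) C A, ← hAC,
      ← mul_assoc (A^r) A C, ← pow_succ, mul_assoc (A^(r+1)) B A, hba, mul_add,
      ← mul_assoc, ← pow_succ, succ_nsmul (A ^ (r+1) * C) (r+1)]
    abel

lemma bpow' (hBA : B * A - A * B = C) (hAC : A * C = C * A) (r : ℕ) :
    B * A ^ r = A ^ r * B + r • (A ^ (r-1) * C) := by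
  cases r with
  | zero => simp
  | succ r => simpa using bpow A B C hBA hAC r

lemma termB (hBA : B * A - A * B = C) (hAC : A * C = C * A) (hBC : B * C = C * B) (r s : ℕ) :
    B * (A ^ r * B ^ s) = A ^ r * B ^ (s+1) + r • (A ^ (r-1) * B ^ s * C) := by
  rw [← mul_assoc, bpow' A B C hBA hAC r, add_mul, smul_mul_assoc, mul_assoc, ← pow_succ',
    mul_assoc (A^(r-1)) C (B^s), cB B C hBC, ← mul_assoc]

lemma keyM (hBA : B * A - A * B = C) (hAC : A * C = C * A) (hBC : B * C = C * B)
    (M : ℕ → 𝔄)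
    (hM : ∀ m, M m = ∑ r ∈ Finset.range (m + 1), m.choose r • (A ^ r * B ^ (m - r)))
    (m : ℕ) : (A + B) * M m = M (m+1) + m • (M (m-1) * C) := by
  cases m with
  | zero =>
    rw [hM 0, hM 1]
    simp [sum_range_succ, add_comm]
  | succ t =>
    rw [hM (t+1), hM (t+2), show t+1-1 = t from rfl, hM t]
    rw [add_mul, Finset.mul_sum, Finset.mul_sum]
    simp only [mul_smul_comm]
    have hA : ∑ r ∈ range (t+2), (t+1).choose r • (A * (A^r * B^(t+1-r)))
        = ∑ r ∈ range (t+2), (t+1).choose r • (A^(r+1) * B^(t+1-r)) := by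
      refine sum_congr rfl fun r _ => ?_
      rw [← mul_assoc, ← pow_succ']
    have hB : ∑ r ∈ range (t+2), (t+1).choose r • (B * (A^r * B^(t+1-r)))
        = (∑ r ∈ range (t+2), (t+1).choose r • (A^r * B^(t+2-r)))
          + ∑ r ∈ range (t+2), ((t+1).choose r * r) • (A^(r-1) * B^(t+1-r) * C) := by
      rw [← sum_add_distrib]
      refine sum_congr rfl fun r hr => ?_
      have hr' : r < t+2 := mem_range.mp hr
      have e : t+1-r+1 = t+2-r := by omega
      rw [termB A B C hBA hAC hBC, smul_add, smul_smul, e]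
    have hS3 : ∑ r ∈ range (t+2), ((t+1).choose r * r) • (A^(r-1) * B^(t+1-r) * C)
        = (t+1) • ((∑ r ∈ range (t+1), t.choose r • (A^r * B^(t-r))) * C) := by
      rw [Finset.sum_mul, Finset.smul_sum, Finset.sum_range_succ']
      simp only [Nat.choose_zero_right, mul_zero, zero_smul, add_zero]
      refine sum_congr rfl fun r _ => ?_
      have e1 : r+1-1 = r := by omega
      have e2 : t+1-(r+1) = t-r := by omega
      rw [e1, e2, smul_mul_assoc, smul_smul, ← Nat.add_one_mul_choose_eq]
    have hS12 : ∑ r ∈ range (t+3), (t+2).choose r • (A^r * B^(t+2-r))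
        = (∑ r ∈ range (t+2), (t+1).choose r • (A^(r+1) * B^(t+1-r)))
          + ∑ r ∈ range (t+2), (t+1).choose r • (A^r * B^(t+2-r)) := by
      rw [Finset.sum_range_succ']
      have step : ∀ r ∈ range (t+2), (t+2).choose (r+1) • (A^(r+1) * B^(t+2-(r+1)))
          = (t+1).choose r • (A^(r+1) * B^(t+1-r))
            + (t+1).choose (r+1) • (A^(r+1) * B^(t+1-r)) := by
        intro r _
        have e : t+2-(r+1) = t+1-r := by omega
        have p : (t+2).choose (r+1) = (t+1).choose r + (t+1).choose (r+1) :=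
          Nat.choose_succ_succ (t+1) r
        rw [e, p, add_smul]
      rw [sum_congr rfl step, sum_add_distrib]
      have hS2 : ∑ r ∈ range (t+2), (t+1).choose r • (A^r * B^(t+2-r))
          = (∑ r ∈ range (t+2), (t+1).choose (r+1) • (A^(r+1) * B^(t+1-r)))
            + (t+2).choose 0 • (A^0 * B^(t+2-0)) := by
        rw [Finset.sum_range_succ']
        congr 1
        conv_rhs => rw [Finset.sum_range_succ]
        simp only [Nat.choose_succ_self, zero_smul, add_zero]
        refine sum_congr rfl fun r _ => ?_
        have e : t+2-(r+1) = t+1-r := by omega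
        rw [e]
      rw [hS2]
      abel
    rw [hA, hB, hS3, hS12]
    abel
end

section
variable {𝔄 : Type*} [Ring 𝔄] [Algebra ℚ 𝔄] (A B C : 𝔄)

lemma mainaux (hBA : B * A - A * B = C) (hAC : A * C = C * A) (hBC : B * C = C * B)
    (M : ℕ → 𝔄)
    (hM : ∀ m, M m = ∑ r ∈ Finset.range (m + 1), m.choose r • (A ^ r * B ^ (m - r)))
    (n : ℕ) : (A + B) ^ n = ∑ k ∈ range (n+1), aa n k • (M (n - 2*k) * C ^ k) := by
  induction n with
  | zero =>
    rw [pow_zero, Finset.sum_range_one, aa_zero, one_smul, pow_zero, mul_one, hM 0]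
    simp
  | succ n ih =>
    have hstep : ∀ k, (A+B) * (M (n-2*k) * C^k)
        = M (n-2*k+1) * C^k + (n-2*k) • (M (n-2*k-1) * C^(k+1)) := by
      intro k
      rw [← mul_assoc, keyM A B C hBA hAC hBC M hM, add_mul, smul_mul_assoc,
        mul_assoc (M (n-2*k-1)) C (C^k), ← pow_succ']
    have hterm : ∀ k, aa (n+1) (k+1) • (M (n+1-2*(k+1)) * C^(k+1))
        = aa n (k+1) • (M (n-2*(k+1)+1) * C^(k+1))
          + (aa n k * ((n-2*k : ℕ) : ℚ)) • (M (n-2*k-1) * C^(k+1)) := by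
      intro k
      rw [show n+1-2*(k+1) = n-2*k-1 from by omega, aa_rec, add_smul, mul_comm (aa n k)]
      congr 1
      by_cases h : 2*(k+1) ≤ n
      · rw [show n-2*(k+1)+1 = n-2*k-1 from by omega]
      · rw [aa_nil _ _ (by omega), zero_smul, zero_smul]
    rw [pow_succ', ih, Finset.mul_sum]
    simp only [mul_smul_comm]
    rw [sum_congr rfl fun k _ => by rw [hstep k]]
    simp only [smul_add]
    rw [sum_add_distrib]
    simp only [← Nat.cast_smul_eq_nsmul ℚ, smul_smul]
    have e1 : ∑ k ∈ range (n+1), aa n k • (M (n-2*k+1) * C^k)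
        = (∑ k ∈ range (n+1), aa n (k+1) • (M (n-2*(k+1)+1) * C^(k+1)))
          + aa n 0 • (M (n+1) * C^0) := by
      rw [Finset.sum_range_succ']
      congr 1
      conv_rhs => rw [Finset.sum_range_succ]
      rw [aa_nil n (n+1) (by omega), zero_smul, add_zero]
    rw [e1]
    conv_rhs => rw [Finset.sum_range_succ']
    rw [sum_congr rfl fun k _ => hterm k, sum_add_distrib]
    rw [aa_zero, aa_zero, show n+1-2*0 = n+1 from by omega]
    abel
end

theorem stmt_12 {𝔄 : Type*} [Ring 𝔄] [Algebra ℚ 𝔄] (A B C : 𝔄)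
    (hBA : B * A - A * B = C) (hAC : A * C = C * A) (hBC : B * C = C * B)
    (M : ℕ → 𝔄)
    (hM : ∀ m, M m = ∑ r ∈ Finset.range (m + 1), m.choose r • (A ^ r * B ^ (m - r)))
    (n : ℕ) :
    (A + B) ^ n =
      ∑ k ∈ Finset.range (n / 2 + 1),
        M (n - 2 * k) *
          (((n.factorial : ℚ) / ((n - 2 * k).factorial * k.factorial * 2 ^ k)) • C ^ k) := by
  rw [mainaux A B C hBA hAC hBC M hM n]
  rw [← Finset.sum_subset (Finset.range_subset_range.mpr (show n/2+1 ≤ n+1 by omega))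
    (fun x _ hx => by
      rw [aa_nil n x (by
        have : ¬ x < n/2+1 := fun h => hx (Finset.mem_range.mpr h)
        omega), zero_smul])]
  refine Finset.sum_congr rfl fun k hk => ?_
  have hk' : 2*k ≤ n := by
    have : k < n/2+1 := Finset.mem_range.mp hk
    omega
  rw [aa_eq n k hk', mul_smul_comm]
end

section
/- For the operators A = multiplication by x and B = λ·(d/dx) on smooth functions (λ a scalar), applying (A+B)^n to the constant function 1 gives (x + λ d/dx)^n 1 = ∑_{k=0}^{⌊n/2⌋} x^{n-2k} · n!/((n-2k)!·k!·2^k) · λ^k. -/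
open Finset

noncomputable def Cf (n k : ℕ) : ℝ :=
  (n.factorial : ℝ) / ((n - 2 * k).factorial * k.factorial * 2 ^ k)

lemma Cf_zero (n : ℕ) : Cf n 0 = 1 := by
  simp [Cf, Nat.factorial_ne_zero]

lemma Cf_rec (a k : ℕ) :
    Cf (a + 2 * k + 3) (k + 1) = Cf (a + 2 * k + 2) (k + 1) + ((a : ℝ) + 2) * Cf (a + 2 * k + 2) k := by
  have e1 : a + 2 * k + 3 - 2 * (k + 1) = a + 1 := by omega
  have e2 : a + 2 * k + 2 - 2 * (k + 1) = a := by omega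
  have e3 : a + 2 * k + 2 - 2 * k = a + 2 := by omega
  have e4 : a + 2 * k + 3 = (a + 2 * k + 2) + 1 := by ring
  simp only [Cf, e1, e2, e3, e4, Nat.factorial_succ]
  have hf1 : ((a + 2 * k + 2).factorial : ℝ) ≠ 0 := Nat.cast_ne_zero.2 (Nat.factorial_ne_zero _)
  have hf2 : ((a : ℕ).factorial : ℝ) ≠ 0 := Nat.cast_ne_zero.2 (Nat.factorial_ne_zero _)
  have hf3 : ((k : ℕ).factorial : ℝ) ≠ 0 := Nat.cast_ne_zero.2 (Nat.factorial_ne_zero _)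
  have h2 : (2 : ℝ) ^ k ≠ 0 := by positivity
  push_cast
  field_simp
  ring

lemma Cf_top (m : ℕ) : Cf (2 * m + 2) (m + 1) = Cf (2 * m + 1) m := by
  have e1 : 2 * m + 2 - 2 * (m + 1) = 0 := by omega
  have e2 : 2 * m + 1 - 2 * m = 1 := by omega
  have e3 : 2 * m + 2 = (2 * m + 1) + 1 := by ring
  simp only [Cf, e1, e2, e3, Nat.factorial_succ, Nat.factorial_zero, Nat.factorial_one]
  have hf1 : ((2 * m + 1).factorial : ℝ) ≠ 0 := Nat.cast_ne_zero.2 (Nat.factorial_ne_zero _)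
  have hf3 : ((m : ℕ).factorial : ℝ) ≠ 0 := Nat.cast_ne_zero.2 (Nat.factorial_ne_zero _)
  have h2 : (2 : ℝ) ^ m ≠ 0 := by positivity
  push_cast
  field_simp
  ring

lemma derivS (n : ℕ) (l x : ℝ) :
    deriv (fun y : ℝ => ∑ k ∈ range (n / 2 + 1), y ^ (n - 2 * k) * Cf n k * l ^ k) x =
      ∑ k ∈ range (n / 2 + 1), ((n - 2 * k : ℕ) : ℝ) * x ^ (n - 2 * k - 1) * Cf n k * l ^ k := by
  have h : HasDerivAt (fun y : ℝ => ∑ k ∈ range (n / 2 + 1), y ^ (n - 2 * k) * Cf n k * l ^ k)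
      (∑ k ∈ range (n / 2 + 1), ((n - 2 * k : ℕ) : ℝ) * x ^ (n - 2 * k - 1) * Cf n k * l ^ k) x := by
    apply HasDerivAt.fun_sum
    intro k _
    exact ((hasDerivAt_pow (n - 2 * k) x).mul_const (Cf n k)).mul_const (l ^ k)
  exact h.deriv

lemma main_id (n : ℕ) (l x : ℝ) :
    (∑ k ∈ range (n / 2 + 1), x ^ (n + 1 - 2 * k) * Cf n k * l ^ k)
      + (∑ k ∈ range (n / 2 + 1), ((n - 2 * k : ℕ) : ℝ) * x ^ (n - 2 * k - 1) * Cf n k * l ^ (k + 1))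
    = ∑ k ∈ range ((n + 1) / 2 + 1), x ^ (n + 1 - 2 * k) * Cf (n + 1) k * l ^ k := by
  obtain ⟨m, rfl | rfl⟩ := Nat.even_or_odd' n
  · -- n = 2m
    have h1 : 2 * m / 2 = m := by omega
    have h2 : (2 * m + 1) / 2 = m := by omega
    rw [h1, h2]
    rw [Finset.sum_range_succ (fun k => ((2 * m - 2 * k : ℕ) : ℝ) * x ^ (2 * m - 2 * k - 1) * Cf (2 * m) k * l ^ (k + 1)) m]
    rw [Finset.sum_range_succ' (fun k => x ^ (2 * m + 1 - 2 * k) * Cf (2 * m) k * l ^ k) m]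
    rw [Finset.sum_range_succ' (fun k => x ^ (2 * m + 1 - 2 * k) * Cf (2 * m + 1) k * l ^ k) m]
    simp only [Nat.sub_self, Nat.cast_zero, zero_mul, add_zero, Cf_zero, pow_zero, mul_one,
      Nat.sub_zero]
    have hsum : (∑ k ∈ range m, x ^ (2 * m + 1 - 2 * (k + 1)) * Cf (2 * m) (k + 1) * l ^ (k + 1))
        + (∑ k ∈ range m, ((2 * m - 2 * k : ℕ) : ℝ) * x ^ (2 * m - 2 * k - 1) * Cf (2 * m) k * l ^ (k + 1))
        = ∑ k ∈ range m, x ^ (2 * m + 1 - 2 * (k + 1)) * Cf (2 * m + 1) (k + 1) * l ^ (k + 1) := by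
      rw [← Finset.sum_add_distrib]
      apply Finset.sum_congr rfl
      intro k hk
      have hk' : k < m := Finset.mem_range.mp hk
      obtain ⟨a, ha⟩ : ∃ a, 2 * m = a + 2 * k + 2 := ⟨2 * m - 2 * k - 2, by omega⟩
      have e1 : 2 * m + 1 - 2 * (k + 1) = 2 * m - 2 * k - 1 := by omega
      have e2 : ((2 * m - 2 * k : ℕ) : ℝ) = (a : ℝ) + 2 := by
        rw [ha]; push_cast [show a + 2 * k + 2 - 2 * k = a + 2 by omega]; ring
      rw [e1, e2]
      have hrec' : Cf (2 * m + 1) (k + 1) = Cf (2 * m) (k + 1) + ((a : ℝ) + 2) * Cf (2 * m) k := by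
        have h3 : 2 * m + 1 = a + 2 * k + 3 := by omega
        rw [h3, ha]
        exact Cf_rec a k
      rw [hrec']
      ring
    linear_combination hsum
  · -- n = 2m + 1
    have h1 : (2 * m + 1) / 2 = m := by omega
    have h2 : (2 * m + 1 + 1) / 2 = m + 1 := by omega
    rw [h1, h2]
    rw [Finset.sum_range_succ (fun k => ((2 * m + 1 - 2 * k : ℕ) : ℝ) * x ^ (2 * m + 1 - 2 * k - 1) * Cf (2 * m + 1) k * l ^ (k + 1)) m]
    rw [Finset.sum_range_succ' (fun k => x ^ (2 * m + 1 + 1 - 2 * k) * Cf (2 * m + 1) k * l ^ k) m]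
    rw [Finset.sum_range_succ' (fun k => x ^ (2 * m + 1 + 1 - 2 * k) * Cf (2 * m + 2) k * l ^ k) (m + 1)]
    rw [Finset.sum_range_succ (fun k => x ^ (2 * m + 1 + 1 - 2 * (k + 1)) * Cf (2 * m + 2) (k + 1) * l ^ (k + 1)) m]
    simp only [Cf_zero, pow_zero, mul_one, Nat.sub_zero]
    have etop1 : ((2 * m + 1 - 2 * m : ℕ) : ℝ) = 1 := by norm_num
    have etop2 : 2 * m + 1 - 2 * m - 1 = 0 := by omega
    have etop3 : 2 * m + 1 + 1 - 2 * (m + 1) = 0 := by omega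
    rw [etop1, etop2, etop3, Cf_top]
    simp only [pow_zero]
    have hsum : (∑ k ∈ range m, x ^ (2 * m + 1 + 1 - 2 * (k + 1)) * Cf (2 * m + 1) (k + 1) * l ^ (k + 1))
        + (∑ k ∈ range m, ((2 * m + 1 - 2 * k : ℕ) : ℝ) * x ^ (2 * m + 1 - 2 * k - 1) * Cf (2 * m + 1) k * l ^ (k + 1))
        = ∑ k ∈ range m, x ^ (2 * m + 1 + 1 - 2 * (k + 1)) * Cf (2 * m + 2) (k + 1) * l ^ (k + 1) := by
      rw [← Finset.sum_add_distrib]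
      apply Finset.sum_congr rfl
      intro k hk
      have hk' : k < m := Finset.mem_range.mp hk
      obtain ⟨a, ha⟩ : ∃ a, 2 * m + 1 = a + 2 * k + 2 := ⟨2 * m - 2 * k - 1, by omega⟩
      have e1 : 2 * m + 1 + 1 - 2 * (k + 1) = 2 * m - 2 * k := by omega
      have e2 : 2 * m + 1 - 2 * k - 1 = 2 * m - 2 * k := by omega
      have e3 : ((2 * m + 1 - 2 * k : ℕ) : ℝ) = (a : ℝ) + 2 := by
        rw [ha]; push_cast [show a + 2 * k + 2 - 2 * k = a + 2 by omega]; ring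
      rw [e1, e2, e3]
      have hrec' : Cf (2 * m + 2) (k + 1) = Cf (2 * m + 1) (k + 1) + ((a : ℝ) + 2) * Cf (2 * m + 1) k := by
        have h3 : 2 * m + 2 = a + 2 * k + 3 := by omega
        rw [h3, ha]
        exact Cf_rec a k
      rw [hrec']
      ring
    linear_combination hsum

lemma iter_eq (l : ℝ) (n : ℕ) :
    (fun f : ℝ → ℝ => fun y => y * f y + l * deriv f y)^[n] (fun _ => 1) =
      fun x => ∑ k ∈ range (n / 2 + 1), x ^ (n - 2 * k) * Cf n k * l ^ k := by
  induction n with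
  | zero => funext x; simp [Cf_zero]
  | succ n ih =>
    rw [Function.iterate_succ_apply', ih]
    funext x
    simp only
    rw [derivS]
    have hx : x * (∑ k ∈ range (n / 2 + 1), x ^ (n - 2 * k) * Cf n k * l ^ k)
        = ∑ k ∈ range (n / 2 + 1), x ^ (n + 1 - 2 * k) * Cf n k * l ^ k := by
      rw [Finset.mul_sum]
      apply Finset.sum_congr rfl
      intro k hk
      have hk' : 2 * k ≤ n := by have := Finset.mem_range.mp hk; omega
      have e : n + 1 - 2 * k = (n - 2 * k) + 1 := by omega
      rw [e, pow_succ]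
      ring
    have hl : l * (∑ k ∈ range (n / 2 + 1), ((n - 2 * k : ℕ) : ℝ) * x ^ (n - 2 * k - 1) * Cf n k * l ^ k)
        = ∑ k ∈ range (n / 2 + 1), ((n - 2 * k : ℕ) : ℝ) * x ^ (n - 2 * k - 1) * Cf n k * l ^ (k + 1) := by
      rw [Finset.mul_sum]
      apply Finset.sum_congr rfl
      intro k _
      rw [pow_succ]
      ring
    rw [hx, hl, main_id]

theorem stmt_14 (l : ℝ) (n : ℕ) (x : ℝ) :
    (fun f : ℝ → ℝ => fun y => y * f y + l * deriv f y)^[n] (fun _ => 1) x =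
      ∑ k ∈ Finset.range (n / 2 + 1),
        x ^ (n - 2 * k) *
          ((n.factorial : ℝ) / ((n - 2 * k).factorial * k.factorial * 2 ^ k)) * l ^ k := by
  rw [iter_eq]
  simp only [Cf]
end
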